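/- Let I be an ideal on ℕ such that I* ⊆ I, where I* = {F ⊆ ℕ : {φ_n : n ∈ F} is nowhere dense in 𝕏(I)}. Then the space 𝕐(I*) is nodec: every nowhere dense subset of 𝕐(I*) is closed in 𝕐(I*). -/

import Mathlib

/-- Points of the space `2^ℕ × ℕ`. -/
abbrev Pt : Type := (ℕ → Bool) × ℕ

/-- `𝕏`: the family of finite unions of basic clopen rectangles `[s] × {m}`
(including `∅`), viewed inside the cube `2^(2^ℕ × ℕ)` as `Pt → Bool`.
A piece is coded by `(s, len, m)`: the rectangle `[s ↾ len] × {m}`. -/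
def XX : Set (Pt → Bool) :=
  {θ | ∃ L : List ((ℕ → Bool) × ℕ × ℕ),
    ∀ p : Pt, θ p = true ↔ ∃ q ∈ L, p.2 = q.2.2 ∧ ∀ i < q.2.1, p.1 i = q.1 i}

/-- An ideal on ℕ containing all finite sets. -/
def IsIdeal (I : Set (Set ℕ)) : Prop :=
  (∀ A ∈ I, ∀ B, B ⊆ A → B ∈ I) ∧
  (∀ A ∈ I, ∀ B ∈ I, A ∪ B ∈ I) ∧
  (∀ A : Set ℕ, A.Finite → A ∈ I)

/-- The topology `ρ_I` on the cube `2^(2^ℕ × ℕ)`, generated by the sets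
`(α,p)⁺` and `(α,p)⁻` for `α` the characteristic function of a member of `I`. -/
def rho (I : Set (Set ℕ)) : TopologicalSpace (Pt → Bool) :=
  TopologicalSpace.generateFrom
    {S | ∃ A ∈ I, ∃ p : ℕ,
      S = {θ | θ (A.boolIndicator, p) = true} ∨ S = {θ | θ (A.boolIndicator, p) = false}}

/-- The subspace topology induced by `ρ_I` on a subset of the cube. -/
def subTop (S : Set (Pt → Bool)) (I : Set (Set ℕ)) : TopologicalSpace {θ // θ ∈ S} :=
  TopologicalSpace.induced Subtype.val (rho I)

/-- `ψ_n = φ_n ∪ ({α : α(n) = 1} × ℕ)`, for an enumeration `φ` of `𝕏`. -/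
def psi (φ : ℕ → Pt → Bool) (n : ℕ) : Pt → Bool := fun p => φ n p || p.1 n

/-- `𝕐 = {ψ_n : n ∈ ℕ}`. -/
def YY (φ : ℕ → Pt → Bool) : Set (Pt → Bool) := Set.range (psi φ)

/-- `K* = {F ⊆ ℕ : {φ_n : n ∈ F} is nowhere dense in 𝕏(K)}`. -/
def starIdeal (φ : ℕ → Pt → Bool) (K : Set (Set ℕ)) : Set (Set ℕ) :=
  {F | @IsNowhereDense _ (subTop XX K) {θ : {θ // θ ∈ XX} | ∃ n ∈ F, φ n = θ.1}}

/- ### generic nowhere-dense lemmas -/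

lemma nwd_use {X : Type*} [TopologicalSpace X] {s U : Set X} (h : IsNowhereDense s)
    (hU : IsOpen U) (hne : U.Nonempty) : ∃ x ∈ U, x ∉ closure s := by
  by_contra hc
  push_neg at hc
  have h1 : U ⊆ interior (closure s) := hU.subset_interior_iff.mpr hc
  rw [h] at h1
  obtain ⟨x, hx⟩ := hne
  exact (h1 hx).elim

lemma nwd_use' {X : Type*} [TopologicalSpace X] {s U : Set X} (h : IsNowhereDense s)
    (hU : IsOpen U) (hne : U.Nonempty) :
    ∃ V : Set X, IsOpen V ∧ V.Nonempty ∧ V ⊆ U ∧ V ∩ s = ∅ := by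
  obtain ⟨x, hxU, hxc⟩ := nwd_use h hU hne
  refine ⟨U ∩ (closure s)ᶜ, hU.inter isClosed_closure.isOpen_compl, ⟨x, hxU, hxc⟩,
    Set.inter_subset_left, ?_⟩
  rw [Set.eq_empty_iff_forall_notMem]
  rintro y ⟨⟨-, hy2⟩, hys⟩
  exact hy2 (subset_closure hys)

lemma nwd_intro {X : Type*} [TopologicalSpace X] {s : Set X}
    (h : ∀ U, IsOpen U → U.Nonempty → ∃ V, IsOpen V ∧ V.Nonempty ∧ V ⊆ U ∧ V ∩ s = ∅) :
    IsNowhereDense s := by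
  rw [IsNowhereDense, ← Set.not_nonempty_iff_eq_empty]
  rintro ⟨x, hx⟩
  obtain ⟨V, hVo, ⟨y, hy⟩, hVs, hdisj⟩ := h _ isOpen_interior ⟨x, hx⟩
  have hycl : y ∈ closure s := interior_subset (hVs hy)
  obtain ⟨z, hz⟩ := (mem_closure_iff.1 hycl) V hVo hy
  rw [hdisj] at hz
  exact hz

lemma nwd_union {X : Type*} [TopologicalSpace X] {s t : Set X}
    (hs : IsNowhereDense s) (ht : IsNowhereDense t) : IsNowhereDense (s ∪ t) := by
  apply nwd_intro
  intro U hU hne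
  obtain ⟨V, hVo, hVne, hVU, hVs⟩ := nwd_use' hs hU hne
  obtain ⟨W, hWo, hWne, hWV, hWt⟩ := nwd_use' ht hVo hVne
  refine ⟨W, hWo, hWne, hWV.trans hVU, ?_⟩
  rw [Set.eq_empty_iff_forall_notMem]
  rintro y ⟨hyW, hys | hyt⟩
  · rw [Set.eq_empty_iff_forall_notMem] at hVs
    exact hVs y ⟨hWV hyW, hys⟩
  · rw [Set.eq_empty_iff_forall_notMem] at hWt
    exact hWt y ⟨hyW, hyt⟩

/- ### list helpers -/

lemma le_foldr_max {l : List ℕ} {a : ℕ} (h : a ∈ l) : a ≤ l.foldr max 0 := by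
  induction l with
  | nil => exact absurd h List.not_mem_nil
  | cons b l ih =>
    rcases List.mem_cons.1 h with rfl | h
    · exact le_max_left _ _
    · exact le_trans (ih h) (le_max_right _ _)

lemma exists_bound₁ {α : Type*} (P : α → ℕ → Prop)
    (mono : ∀ a m n, m ≤ n → P a m → P a n) :
    ∀ l : List α, (∀ a ∈ l, ∃ N, P a N) → ∃ N, ∀ a ∈ l, P a N := by
  intro l
  induction l with
  | nil => exact fun _ => ⟨0, by simp⟩
  | cons a l ih =>
    intro h
    obtain ⟨N1, hN1⟩ := h a List.mem_cons_self
    obtain ⟨N2, hN2⟩ := ih (fun b hb => h b (List.mem_cons_of_mem a hb))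
    refine ⟨max N1 N2, fun b hb => ?_⟩
    rcases List.mem_cons.1 hb with rfl | hb
    · exact mono _ _ _ (le_max_left _ _) hN1
    · exact mono _ _ _ (le_max_right _ _) (hN2 b hb)

/- ### patterns -/

abbrev Cond := (Set ℕ × ℕ) × Bool

noncomputable def condPt (c : Cond) : Pt := (c.1.1.boolIndicator, c.1.2)

def patSet (cs : List Cond) : Set (Pt → Bool) := {θ | ∀ c ∈ cs, θ (condPt c) = c.2}

def Consistent (cs : List Cond) : Prop :=
  ∀ c ∈ cs, ∀ c' ∈ cs, c.1.1 = c'.1.1 → c.1.2 = c'.1.2 → c.2 = c'.2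

def setsUnion (cs : List Cond) : Set ℕ := cs.foldr (fun c acc => c.1.1 ∪ acc) ∅

lemma mem_setsUnion {cs : List Cond} {z : Cond} (hz : z ∈ cs) {a : ℕ} (ha : a ∈ z.1.1) :
    a ∈ setsUnion cs := by
  induction cs with
  | nil => exact absurd hz List.not_mem_nil
  | cons b l ih =>
    rcases List.mem_cons.1 hz with rfl | hz
    · exact Or.inl ha
    · exact Or.inr (ih hz)

lemma consistent_of_witness {θ : Pt → Bool} {cs : List Cond} (h : θ ∈ patSet cs) :
    Consistent cs := by
  intro a ha b hb hA hp
  have h1 := h a ha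
  have h2 := h b hb
  have : condPt a = condPt b := by unfold condPt; rw [hA, hp]
  rw [this, h2] at h1
  exact h1.symm

lemma XX_eventually_false {θ : Pt → Bool} (hθ : θ ∈ XX) (α : ℕ → Bool) :
    ∃ p : ℕ, θ (α, p) = false := by
  obtain ⟨L, hL⟩ := hθ
  refine ⟨(L.map (fun q => q.2.2)).foldr max 0 + 1, ?_⟩
  cases h : θ (α, (L.map (fun q => q.2.2)).foldr max 0 + 1) with
  | false => rfl
  | true =>
    obtain ⟨q, hq, hp, -⟩ := (hL _).1 h
    have : q.2.2 ≤ (L.map (fun q => q.2.2)).foldr max 0 :=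
      le_foldr_max (List.mem_map.2 ⟨q, hq, rfl⟩)
    omega

/- ### realizability -/

lemma realize {cs : List Cond} (hcon : Consistent cs) :
    ∃ θ ∈ XX, ∀ c ∈ cs, θ (condPt c) = c.2 := by
  classical
  set trues := cs.filter (fun c => c.2 == true) with htr
  set falses := cs.filter (fun c => c.2 == false) with hfa
  have htrues : ∀ t ∈ trues, t ∈ cs ∧ t.2 = true := by
    intro t ht
    have := List.mem_filter.1 ht
    exact ⟨this.1, by simpa using this.2⟩
  have hfalses : ∀ f ∈ falses, f ∈ cs ∧ f.2 = false := by
    intro f hf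
    have := List.mem_filter.1 hf
    exact ⟨this.1, by simpa using this.2⟩
  have hNex : ∃ N, ∀ t ∈ trues, ∀ f ∈ falses, t.1.2 = f.1.2 →
      ∃ i, i < N ∧ t.1.1.boolIndicator i ≠ f.1.1.boolIndicator i := by
    have inner : ∀ t ∈ trues, ∃ N, ∀ f ∈ falses, t.1.2 = f.1.2 →
        ∃ i, i < N ∧ t.1.1.boolIndicator i ≠ f.1.1.boolIndicator i := by
      intro t ht
      have single : ∀ f ∈ falses, ∃ N, (t.1.2 = f.1.2 →
          ∃ i, i < N ∧ t.1.1.boolIndicator i ≠ f.1.1.boolIndicator i) := by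
        intro f hf
        by_cases heq : t.1.2 = f.1.2
        · have hne : t.1.1 ≠ f.1.1 := by
            intro hAB
            have := hcon t (htrues t ht).1 f (hfalses f hf).1 hAB heq
            rw [(htrues t ht).2, (hfalses f hf).2] at this
            exact Bool.noConfusion this
          obtain ⟨i, hi⟩ : ∃ i, t.1.1.boolIndicator i ≠ f.1.1.boolIndicator i := by
            by_contra hall
            push_neg at hall
            apply hne
            ext x
            rw [Set.mem_iff_boolIndicator, Set.mem_iff_boolIndicator, hall x]
          exact ⟨i + 1, fun _ => ⟨i, Nat.lt_succ_self i, hi⟩⟩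
        · exact ⟨0, fun h => absurd h heq⟩
      refine exists_bound₁ _ ?_ falses single
      intro f m n hmn h heq
      exact (h heq).imp fun i hi => ⟨lt_of_lt_of_le hi.1 hmn, hi.2⟩
    refine exists_bound₁ _ ?_ trues inner
    intro t m n hmn h f hf heq
    exact (h f hf heq).imp fun i hi => ⟨lt_of_lt_of_le hi.1 hmn, hi.2⟩
  obtain ⟨N, hN⟩ := hNex
  refine ⟨fun q => decide (∃ t ∈ trues, q.2 = t.1.2 ∧ ∀ i < N, q.1 i = t.1.1.boolIndicator i),
    ⟨trues.map (fun t => (t.1.1.boolIndicator, N, t.1.2)), ?_⟩, ?_⟩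
  · intro p
    rw [decide_eq_true_iff]
    constructor
    · rintro ⟨t, ht, hp, hi⟩
      exact ⟨(t.1.1.boolIndicator, N, t.1.2), List.mem_map.2 ⟨t, ht, rfl⟩, hp, hi⟩
    · rintro ⟨q, hq, hp, hi⟩
      obtain ⟨t, ht, rfl⟩ := List.mem_map.1 hq
      exact ⟨t, ht, hp, hi⟩
  · intro c hc
    cases hb : c.2 with
    | true =>
      apply decide_eq_true
      exact ⟨c, List.mem_filter.2 ⟨hc, by simp [hb]⟩, rfl, fun i _ => rfl⟩
    | false =>
      apply decide_eq_false
      rintro ⟨t, ht, hp, hi⟩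
      obtain ⟨i, hiN, hne⟩ := hN t ht c (List.mem_filter.2 ⟨hc, by simp [hb]⟩) hp.symm
      exact hne (hi i hiN).symm

/- ### basic open sets of `rho` -/

lemma patSet_open {K : Set (Set ℕ)} {cs : List Cond} (h : ∀ c ∈ cs, c.1.1 ∈ K) :
    @IsOpen _ (rho K) (patSet cs) := by
  induction cs with
  | nil =>
    have he : patSet [] = Set.univ := by
      ext θ; simp [patSet]
    rw [he]; exact @isOpen_univ _ (rho K)
  | cons c l ih =>
    have he : patSet (c :: l) = {θ : Pt → Bool | θ (condPt c) = c.2} ∩ patSet l := by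
      ext θ; simp [patSet, Set.mem_inter_iff]
    rw [he]
    refine @IsOpen.inter _ (rho K) _ _ ?_ (ih fun z hz => h z (List.mem_cons_of_mem c hz))
    show TopologicalSpace.GenerateOpen _ _
    apply TopologicalSpace.GenerateOpen.basic
    refine ⟨c.1.1, h c List.mem_cons_self, c.1.2, ?_⟩
    cases hb : c.2 with
    | true => left; ext θ; simp [condPt, hb]
    | false => right; ext θ; simp [condPt, hb]

lemma gen_basis {K : Set (Set ℕ)} {U : Set (Pt → Bool)}
    (hU : TopologicalSpace.GenerateOpen
      {S | ∃ A ∈ K, ∃ p : ℕ,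
        S = {θ : Pt → Bool | θ (A.boolIndicator, p) = true} ∨
        S = {θ : Pt → Bool | θ (A.boolIndicator, p) = false}} U) :
    ∀ θ ∈ U, ∃ cs : List Cond, (∀ c ∈ cs, c.1.1 ∈ K) ∧ θ ∈ patSet cs ∧ patSet cs ⊆ U := by
  induction hU with
  | basic s hs =>
    intro θ hθ
    obtain ⟨A, hA, p, h | h⟩ := hs
    · refine ⟨[((A, p), true)], by simpa using hA, ?_, ?_⟩
      · intro c hc
        rcases List.mem_cons.1 hc with rfl | hc
        · subst h; exact hθ
        · exact absurd hc List.not_mem_nil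
      · intro θ' hθ'
        subst h
        exact hθ' ((A, p), true) List.mem_cons_self
    · refine ⟨[((A, p), false)], by simpa using hA, ?_, ?_⟩
      · intro c hc
        rcases List.mem_cons.1 hc with rfl | hc
        · subst h; exact hθ
        · exact absurd hc List.not_mem_nil
      · intro θ' hθ'
        subst h
        exact hθ' ((A, p), false) List.mem_cons_self
  | univ => exact fun θ _ => ⟨[], by simp, by simp [patSet], fun _ _ => trivial⟩
  | inter u v hu hv ihu ihv =>
    intro θ hθ
    obtain ⟨cs1, h1, m1, s1⟩ := ihu θ hθ.1
    obtain ⟨cs2, h2, m2, s2⟩ := ihv θ hθ.2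
    refine ⟨cs1 ++ cs2, ?_, ?_, ?_⟩
    · intro c hc
      rcases List.mem_append.1 hc with hc | hc
      · exact h1 c hc
      · exact h2 c hc
    · intro c hc
      rcases List.mem_append.1 hc with hc | hc
      · exact m1 c hc
      · exact m2 c hc
    · intro θ' hθ'
      exact ⟨s1 (fun c hc => hθ' c (List.mem_append_left _ hc)),
        s2 (fun c hc => hθ' c (List.mem_append_right _ hc))⟩
  | sUnion T hT ih =>
    rintro θ ⟨t, ht, hθt⟩
    obtain ⟨cs, h1, h2, h3⟩ := ih t ht θ hθt
    exact ⟨cs, h1, h2, fun θ' hθ' => ⟨t, ht, h3 hθ'⟩⟩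

lemma trace_open {K : Set (Set ℕ)} {S : Set (Pt → Bool)} {cs : List Cond}
    (h : ∀ c ∈ cs, c.1.1 ∈ K) :
    @IsOpen _ (subTop S K) (Subtype.val ⁻¹' patSet cs : Set {θ // θ ∈ S}) :=
  @isOpen_induced _ _ (rho K) Subtype.val _ (patSet_open h)

lemma sub_basis {K : Set (Set ℕ)} {S : Set (Pt → Bool)} {U : Set {θ // θ ∈ S}}
    (hU : @IsOpen _ (subTop S K) U) {x : {θ // θ ∈ S}} (hx : x ∈ U) :
    ∃ cs : List Cond, (∀ c ∈ cs, c.1.1 ∈ K) ∧ x.1 ∈ patSet cs ∧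
      (Subtype.val ⁻¹' patSet cs : Set {θ // θ ∈ S}) ⊆ U := by
  letI := rho K
  obtain ⟨V, hVo, rfl⟩ := hU
  obtain ⟨cs, h1, h2, h3⟩ := gen_basis hVo x.1 hx
  exact ⟨cs, h1, h2, fun y hy => h3 hy⟩

/- ### the star ideal is closed under finite unions -/

lemma star_empty (φ : ℕ → Pt → Bool) (K : Set (Set ℕ)) : (∅ : Set ℕ) ∈ starIdeal φ K := by
  have h : {θ : {θ // θ ∈ XX} | ∃ n ∈ (∅ : Set ℕ), φ n = θ.1} = ∅ := by
    ext θ; simp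
  show @IsNowhereDense _ (subTop XX K) _
  rw [h]
  exact @isNowhereDense_empty _ (subTop XX K)

lemma star_union {φ : ℕ → Pt → Bool} {K : Set (Set ℕ)} {F G : Set ℕ}
    (hF : F ∈ starIdeal φ K) (hG : G ∈ starIdeal φ K) : F ∪ G ∈ starIdeal φ K := by
  show @IsNowhereDense _ (subTop XX K) _
  have h : {θ : {θ // θ ∈ XX} | ∃ n ∈ F ∪ G, φ n = θ.1} =
      {θ : {θ // θ ∈ XX} | ∃ n ∈ F, φ n = θ.1} ∪ {θ : {θ // θ ∈ XX} | ∃ n ∈ G, φ n = θ.1} := by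
    ext θ
    simp only [Set.mem_setOf_eq, Set.mem_union]
    constructor
    · rintro ⟨n, hn | hn, hφ⟩
      · exact Or.inl ⟨n, hn, hφ⟩
      · exact Or.inr ⟨n, hn, hφ⟩
    · rintro (⟨n, hn, hφ⟩ | ⟨n, hn, hφ⟩)
      · exact ⟨n, Or.inl hn, hφ⟩
      · exact ⟨n, Or.inr hn, hφ⟩
  rw [h]
  exact @nwd_union _ (subTop XX K) _ _ hF hG

lemma setsUnion_star {φ : ℕ → Pt → Bool} {K : Set (Set ℕ)} {cs : List Cond}
    (h : ∀ c ∈ cs, c.1.1 ∈ starIdeal φ K) : setsUnion cs ∈ starIdeal φ K := by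
  induction cs with
  | nil => exact star_empty φ K
  | cons c l ih =>
    exact star_union (h c List.mem_cons_self)
      (ih fun z hz => h z (List.mem_cons_of_mem c hz))

/- ### main lemma: nowhere dense in 𝕐(I*) implies membership in I* -/

lemma lemA (I : Set (Set ℕ)) (φ : ℕ → Pt → Bool) (hran : Set.range φ = XX)
    (hstar : starIdeal φ I ⊆ I) (F : Set ℕ)
    (hS : @IsNowhereDense _ (subTop (YY φ) (starIdeal φ I))
      {y : {θ // θ ∈ YY φ} | ∃ n ∈ F, psi φ n = y.1}) :
    F ∈ starIdeal φ I := by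
  classical
  show @IsNowhereDense _ (subTop XX I) {x : {θ // θ ∈ XX} | ∃ n ∈ F, φ n = x.1}
  apply @nwd_intro _ (subTop XX I)
  intro U hUo hUne
  obtain ⟨x0, hx0⟩ := hUne
  obtain ⟨c, hcI, hx0c, hcU⟩ := sub_basis hUo hx0
  have hccons : Consistent c := consistent_of_witness hx0c
  set c₀ := c.filter (fun z => decide (z.1.1 ∈ starIdeal φ I)) with hc₀def
  have hc₀K : ∀ z ∈ c₀, z.1.1 ∈ starIdeal φ I := by
    intro z hz
    exact of_decide_eq_true (List.mem_filter.1 hz).2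
  have hc₀c : ∀ z ∈ c₀, z ∈ c := fun z hz => (List.mem_filter.1 hz).1
  have hc₀cons : Consistent c₀ := fun a ha b hb => hccons a (hc₀c a ha) b (hc₀c b hb)
  have hGnwd : @IsNowhereDense _ (subTop XX I)
      {x : {θ // θ ∈ XX} | ∃ n ∈ setsUnion c₀, φ n = x.1} := setsUnion_star hc₀K
  obtain ⟨θ₁, hθ₁X, hθ₁⟩ := realize hc₀cons
  obtain ⟨x1, hx1mem, hx1cl⟩ := @nwd_use _ (subTop XX I) _ _ hGnwd
    (trace_open (fun z hz => hstar (hc₀K z hz)))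
    ⟨⟨θ₁, hθ₁X⟩, fun z hz => hθ₁ z hz⟩
  obtain ⟨m, hm⟩ : ∃ m, φ m = x1.1 := by
    have hx : x1.1 ∈ Set.range φ := by rw [hran]; exact x1.2
    exact hx
  have hmG : m ∉ setsUnion c₀ := by
    intro hmem
    have hx1G : x1 ∈ {x : {θ // θ ∈ XX} | ∃ n ∈ setsUnion c₀, φ n = x.1} := ⟨m, hmem, hm⟩
    exact hx1cl (@subset_closure _ (subTop XX I) _ _ hx1G)
  have hx1pat : x1.1 ∈ patSet c₀ := hx1mem
  have hψm : psi φ m ∈ patSet c₀ := by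
    intro z hz
    have hval : φ m (condPt z) = z.2 := by rw [hm]; exact hx1pat z hz
    show (φ m (condPt z) || (condPt z).1 m) = z.2
    cases hb : z.2 with
    | true => rw [hval, hb]; simp
    | false =>
      rw [hval, hb, Bool.false_or]
      exact (z.1.1.notMem_iff_boolIndicator m).1 (fun h => hmG (mem_setsUnion hz h))
  obtain ⟨W, hWo, hWne, hWV₀, hWS⟩ := @nwd_use' _ (subTop (YY φ) (starIdeal φ I)) _ _ hS
    (trace_open hc₀K) ⟨⟨psi φ m, ⟨m, rfl⟩⟩, hψm⟩
  obtain ⟨y1, hy1⟩ := hWne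
  obtain ⟨d, hdK, hy1d, hdW⟩ := sub_basis hWo hy1
  have hy1c₀ : y1.1 ∈ patSet c₀ := hWV₀ hy1
  have hdcons : Consistent d := consistent_of_witness hy1d
  have hdS : ∀ n ∈ F, psi φ n ∉ patSet d := by
    intro n hnF hmem
    have hyW : (⟨psi φ n, ⟨n, rfl⟩⟩ : {θ // θ ∈ YY φ}) ∈ W := hdW hmem
    have hbad : (⟨psi φ n, ⟨n, rfl⟩⟩ : {θ // θ ∈ YY φ}) ∈
        W ∩ {y : {θ // θ ∈ YY φ} | ∃ k ∈ F, psi φ k = y.1} := ⟨hyW, n, hnF, rfl⟩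
    rw [hWS] at hbad
    exact hbad
  have hcd : Consistent (c ++ d) := by
    have key : ∀ u ∈ c, ∀ v ∈ d, u.1.1 = v.1.1 → u.1.2 = v.1.2 → u.2 = v.2 := by
      intro u hu v hv hA' hp'
      have huK : u.1.1 ∈ starIdeal φ I := hA' ▸ hdK v hv
      have hu₀ : u ∈ c₀ := List.mem_filter.2 ⟨hu, decide_eq_true huK⟩
      have h1 : y1.1 (condPt u) = u.2 := hy1c₀ u hu₀
      have h2 : y1.1 (condPt v) = v.2 := hy1d v hv
      have hpt : condPt u = condPt v := by unfold condPt; rw [hA', hp']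
      rw [hpt, h2] at h1
      exact h1.symm
    intro a ha b hb hA hp
    rcases List.mem_append.1 ha with ha' | ha' <;> rcases List.mem_append.1 hb with hb' | hb'
    · exact hccons a ha' b hb' hA hp
    · exact key a ha' b hb' hA hp
    · exact (key b hb' a ha' hA.symm hp.symm).symm
    · exact hdcons a ha' b hb' hA hp
  obtain ⟨θ₂, hθ₂X, hθ₂⟩ := realize hcd
  have hcdI : ∀ z ∈ c ++ d, z.1.1 ∈ I := by
    intro z hz
    rcases List.mem_append.1 hz with hz' | hz'
    · exact hcI z hz'
    · exact hstar (hdK z hz')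
  have hBnwd : @IsNowhereDense _ (subTop XX I)
      {x : {θ // θ ∈ XX} | ∃ n ∈ setsUnion d, φ n = x.1} := setsUnion_star hdK
  have hsub : ∀ x : {θ // θ ∈ XX}, x.1 ∈ patSet (c ++ d) → (∃ n ∈ F, φ n = x.1) →
      x ∈ {x : {θ // θ ∈ XX} | ∃ n ∈ setsUnion d, φ n = x.1} := by
    rintro x hx ⟨n, hnF, hφn⟩
    have hex : ∃ z ∈ d, psi φ n (condPt z) ≠ z.2 := by
      by_contra hall
      push_neg at hall
      exact hdS n hnF hall
    obtain ⟨z, hz, hne⟩ := hex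
    have hφval : φ n (condPt z) = z.2 := by
      rw [hφn]; exact hx z (List.mem_append_right _ hz)
    have hψ : psi φ n (condPt z) = (z.2 || z.1.1.boolIndicator n) := by
      show (φ n (condPt z) || (condPt z).1 n) = (z.2 || z.1.1.boolIndicator n)
      rw [hφval]; rfl
    cases hb : z.2 with
    | true =>
      apply absurd _ hne
      rw [hψ, hb]
      simp
    | false =>
      have hind : z.1.1.boolIndicator n = true := by
        cases hi : z.1.1.boolIndicator n with
        | true => rfl
        | false =>
          have heq : psi φ n (condPt z) = z.2 := by rw [hψ, hi]; simp
          exact absurd heq hne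
      exact ⟨n, mem_setsUnion hz ((z.1.1.mem_iff_boolIndicator n).2 hind), hφn⟩
  obtain ⟨x2, hx2U₁, hx2cl⟩ := @nwd_use _ (subTop XX I) _ _ hBnwd (trace_open hcdI)
      ⟨⟨θ₂, hθ₂X⟩, fun z hz => hθ₂ z hz⟩
  refine ⟨(Subtype.val ⁻¹' patSet (c ++ d)) ∩
      (@closure _ (subTop XX I) {x : {θ // θ ∈ XX} | ∃ n ∈ setsUnion d, φ n = x.1})ᶜ,
      ?_, ⟨x2, hx2U₁, hx2cl⟩, ?_, ?_⟩
  · exact @IsOpen.inter _ (subTop XX I) _ _ (trace_open hcdI)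
      ((@isOpen_compl_iff _ _ (subTop XX I)).2 (@isClosed_closure _ (subTop XX I) _))
  · intro x hx
    apply hcU
    intro z hz
    exact hx.1 z (List.mem_append_left _ hz)
  · rw [Set.eq_empty_iff_forall_notMem]
    rintro x ⟨⟨hxa, hxb⟩, hxF⟩
    have hxB : x ∈ {x : {θ // θ ∈ XX} | ∃ n ∈ setsUnion d, φ n = x.1} := hsub x hxa hxF
    exact hxb (@subset_closure _ (subTop XX I) _ _ hxB)

/-- If `I* ⊆ I`, then `𝕐(I*)` is nodec: every nowhere dense subset is closed. -/
theorem YY_star_nodec (I : Set (Set ℕ)) (hI : IsIdeal I)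
    (φ : ℕ → Pt → Bool) (hinj : Function.Injective φ) (hran : Set.range φ = XX)
    (hstar : starIdeal φ I ⊆ I) :
    ∀ S : Set {θ // θ ∈ YY φ},
      @IsNowhereDense _ (subTop (YY φ) (starIdeal φ I)) S →
      @IsClosed _ (subTop (YY φ) (starIdeal φ I)) S := by
  classical
  intro S hS
  set F : Set ℕ := {n | (⟨psi φ n, ⟨n, rfl⟩⟩ : {θ // θ ∈ YY φ}) ∈ S} with hFdef
  have hSY : S = {y : {θ // θ ∈ YY φ} | ∃ n ∈ F, psi φ n = y.1} := by
    ext y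
    constructor
    · intro hy
      obtain ⟨n, hn⟩ := y.2
      refine ⟨n, ?_, hn⟩
      show (⟨psi φ n, ⟨n, rfl⟩⟩ : {θ // θ ∈ YY φ}) ∈ S
      have he : (⟨psi φ n, ⟨n, rfl⟩⟩ : {θ // θ ∈ YY φ}) = y := Subtype.ext hn
      rw [he]
      exact hy
    · rintro ⟨n, hn, heq⟩
      have he : y = ⟨psi φ n, ⟨n, rfl⟩⟩ := Subtype.ext heq.symm
      rw [he]
      exact hn
  have hFK : F ∈ starIdeal φ I := lemA I φ hran hstar F (by rw [← hSY]; exact hS)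
  rw [← @isOpen_compl_iff _ _ (subTop (YY φ) (starIdeal φ I))]
  have hc : Sᶜ = ⋃ p : ℕ, (Subtype.val ⁻¹' {θ : Pt → Bool | θ (F.boolIndicator, p) = false} :
      Set {θ // θ ∈ YY φ}) := by
    ext y
    simp only [Set.mem_iUnion, Set.mem_compl_iff, Set.mem_preimage, Set.mem_setOf_eq]
    obtain ⟨n, hn⟩ := y.2
    constructor
    · intro hy
      have hnF : n ∉ F := by
        intro h
        apply hy
        rw [hSY]
        exact ⟨n, h, hn⟩
      have hφX : φ n ∈ XX := by rw [← hran]; exact ⟨n, rfl⟩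
      obtain ⟨p, hp⟩ := XX_eventually_false hφX F.boolIndicator
      refine ⟨p, ?_⟩
      rw [← hn]
      show (φ n (F.boolIndicator, p) || F.boolIndicator n) = false
      rw [hp, (F.notMem_iff_boolIndicator n).1 hnF]
      rfl
    · rintro ⟨p, hp⟩ hyS
      rw [hSY] at hyS
      obtain ⟨k, hkF, hk⟩ := hyS
      have hv : psi φ k (F.boolIndicator, p) = false := by rw [hk]; exact hp
      have hv' : (φ k (F.boolIndicator, p) || F.boolIndicator k) = false := hv
      rw [(F.mem_iff_boolIndicator k).1 hkF] at hv'
      simp at hv'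
  rw [hc]
  refine @isOpen_iUnion _ _ (subTop (YY φ) (starIdeal φ I)) _ fun p => ?_
  have hgen : @IsOpen _ (rho (starIdeal φ I)) {θ : Pt → Bool | θ (F.boolIndicator, p) = false} :=
    TopologicalSpace.GenerateOpen.basic _ ⟨F, hFK, p, Or.inr rfl⟩
  exact @isOpen_induced _ _ (rho (starIdeal φ I)) Subtype.val _ hgen
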